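/- Let σ > 0 and δ > 0, set r = δ/σ, and let p_z be the standardized two-component Gaussian mixture density p_z(v) = (N(v;−δ̂,σ̂) + N(v;δ̂,σ̂))/2 with δ̂ = δ/√(σ²+δ²), σ̂ = σ/√(σ²+δ²). Then the differential entropy of p_z satisfies the upper bound H(p_z) ≤ (1/2)(1 + ln(2π)) − (1/2) ln(1 + r²) + ln 2. -/

import Mathlib

open Real MeasureTheory Filter Topology

/-- The univariate Gaussian density `N(v; μ, σ) = (1/(σ√(2π))) exp(−(v−μ)²/(2σ²))`. -/
noncomputable def gauss (μ σ : ℝ) (v : ℝ) : ℝ :=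
  (1 / (σ * Real.sqrt (2 * π))) * Real.exp (-((v - μ) ^ 2) / (2 * σ ^ 2))

/-- The differential entropy `H(p) = −∫ p(v) ln p(v) dv` of a density on ℝ. -/
noncomputable def diffEntropy (p : ℝ → ℝ) : ℝ :=
  -∫ v : ℝ, p v * Real.log (p v)

lemma integrable_sq_mul_exp_neg_mul_sq {b : ℝ} (hb : 0 < b) :
    Integrable fun x : ℝ => x ^ 2 * Real.exp (-b * x ^ 2) := by
  have h := integrable_rpow_mul_exp_neg_mul_sq hb (s := 2) (by norm_num)
  have e : ∀ x : ℝ, x ^ (2:ℝ) = x ^ 2 := fun x => by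
    rw [show (2:ℝ) = ((2:ℕ):ℝ) by norm_num, Real.rpow_natCast]
  simpa [e] using h

lemma integral_sq_mul_exp_neg_mul_sq {b : ℝ} (hb : 0 < b) :
    ∫ x : ℝ, x ^ 2 * Real.exp (-b * x ^ 2) = (1 / (2 * b)) * Real.sqrt (π / b) := by
  set F : ℝ → ℝ := fun x => -(1/(2*b)) * (x * Real.exp (-b * x ^ 2)) with hF
  have hderiv : ∀ x : ℝ, HasDerivAt F
      (x ^ 2 * Real.exp (-b * x ^ 2) - (1/(2*b)) * Real.exp (-b * x ^ 2)) x := by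
    intro x
    have h1 : HasDerivAt (fun x : ℝ => -b * x ^ 2) (-b * (2 * x)) x := by
      simpa [mul_comm] using (hasDerivAt_pow 2 x).const_mul (-b)
    have h2 := h1.exp
    have h3 : HasDerivAt (fun x : ℝ => x * Real.exp (-b * x ^ 2))
        (1 * Real.exp (-b*x^2) + x * (Real.exp (-b*x^2) * (-b*(2*x)))) x :=
      (hasDerivAt_id x).mul h2
    have h4 := h3.const_mul (-(1/(2*b)))
    convert h4 using 1
    have hb0 : b ≠ 0 := hb.ne'
    case e'_4 => rfl
    case e'_5 => rfl
    field_simp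
    ring
  have hcc : Tendsto (fun x : ℝ => (1/(2*b)) * (|x| ^ (1:ℝ) * Real.exp (-b * x ^ 2)))
      (cocompact ℝ) (𝓝 0) := by
    have h := (tendsto_rpow_abs_mul_exp_neg_mul_sq_cocompact hb 1).const_mul (1/(2*b))
    simpa only [mul_zero] using h
  have hnorm : ∀ x : ℝ, ‖F x‖ ≤ (1/(2*b)) * (|x| ^ (1:ℝ) * Real.exp (-b * x ^ 2)) := by
    intro x
    rw [Real.rpow_one]
    have h1 : ‖F x‖ = (1/(2*b)) * (|x| * Real.exp (-b * x ^ 2)) := by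
      rw [hF, Real.norm_eq_abs, abs_mul, abs_neg, abs_mul,
        abs_of_pos (by positivity : (0:ℝ) < 1/(2*b)), Real.abs_exp]
    rw [h1]
  have hFcc : Tendsto F (cocompact ℝ) (𝓝 0) := squeeze_zero_norm hnorm hcc
  have htop : Tendsto F atTop (𝓝 0) :=
    hFcc.mono_left (by rw [cocompact_eq_atBot_atTop]; exact le_sup_right)
  have hbot : Tendsto F atBot (𝓝 0) :=
    hFcc.mono_left (by rw [cocompact_eq_atBot_atTop]; exact le_sup_left)
  have hint2 := integrable_sq_mul_exp_neg_mul_sq hb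
  have hexp := integrable_exp_neg_mul_sq hb
  have hint' : Integrable fun x : ℝ =>
      x ^ 2 * Real.exp (-b * x ^ 2) - (1/(2*b)) * Real.exp (-b * x ^ 2) :=
    hint2.sub (hexp.const_mul _)
  have hzero : (∫ x : ℝ, (x ^ 2 * Real.exp (-b * x ^ 2) - (1/(2*b)) * Real.exp (-b * x ^ 2)))
      = 0 - 0 :=
    integral_of_hasDerivAt_of_tendsto hderiv hint' hbot htop
  have hsplit := integral_sub hint2 (hexp.const_mul (1/(2*b)))
  rw [hzero] at hsplit
  have : ∫ x : ℝ, x ^ 2 * Real.exp (-b * x ^ 2)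
      = ∫ x : ℝ, (1/(2*b)) * Real.exp (-b * x ^ 2) := by linarith
  rw [this, integral_const_mul, integral_gaussian]

lemma gauss_pos {s : ℝ} (hs : 0 < s) (μ v : ℝ) : 0 < gauss μ s v := by
  unfold gauss
  have := Real.pi_pos
  positivity

lemma gauss_continuous (μ s : ℝ) : Continuous (gauss μ s) := by
  unfold gauss
  fun_prop

lemma gauss_le {s : ℝ} (hs : 0 < s) (μ v : ℝ) :
    gauss μ s v ≤ (s * Real.sqrt (2 * π))⁻¹ := by
  unfold gauss
  rw [one_div]
  have h2 : Real.exp (-((v - μ) ^ 2) / (2 * s ^ 2)) ≤ 1 := by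
    rw [Real.exp_le_one_iff]
    have : (0:ℝ) ≤ (v - μ) ^ 2 / (2 * s ^ 2) := by positivity
    linarith [this, (by ring : -((v - μ) ^ 2) / (2 * s ^ 2) = -((v - μ) ^ 2 / (2 * s ^ 2)))]
  have hK : (0:ℝ) ≤ (s * Real.sqrt (2 * π))⁻¹ := by positivity
  calc (s * Real.sqrt (2 * π))⁻¹ * Real.exp (-((v - μ) ^ 2) / (2 * s ^ 2))
      ≤ (s * Real.sqrt (2 * π))⁻¹ * 1 := by
        exact mul_le_mul_of_nonneg_left h2 hK
    _ = (s * Real.sqrt (2 * π))⁻¹ := mul_one _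

lemma log_gauss {s : ℝ} (hs : 0 < s) (μ v : ℝ) :
    Real.log (gauss μ s v) =
      -Real.log (s * Real.sqrt (2 * π)) - (v - μ) ^ 2 / (2 * s ^ 2) := by
  have hK : (0:ℝ) < s * Real.sqrt (2 * π) := by
    have := Real.pi_pos; positivity
  unfold gauss
  rw [one_div, Real.log_mul (by positivity) (Real.exp_ne_zero _), Real.log_inv,
    Real.log_exp]
  ring

lemma gauss_shift {s : ℝ} (hs : 0 < s) (μ : ℝ) (v : ℝ) :
    gauss μ s v = (1 / (s * Real.sqrt (2 * π))) *
      Real.exp (-(1 / (2 * s ^ 2)) * (v - μ) ^ 2) := by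
  unfold gauss
  congr 1
  congr 1
  field_simp

lemma sqrt_pi_div : ∀ {s : ℝ}, 0 < s → Real.sqrt (π / (1 / (2 * s ^ 2))) = s * Real.sqrt (2 * π) := by
  intro s hs
  rw [show π / (1 / (2 * s ^ 2)) = s ^ 2 * (2 * π) by field_simp,
    Real.sqrt_mul (sq_nonneg s), Real.sqrt_sq hs.le]

lemma integrable_gauss {s : ℝ} (hs : 0 < s) (μ : ℝ) : Integrable (gauss μ s) := by
  have hb : (0:ℝ) < 1 / (2 * s ^ 2) := by positivity
  have h := ((integrable_exp_neg_mul_sq hb).const_mul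
    (1 / (s * Real.sqrt (2 * π)))).comp_sub_right μ
  exact h.congr (Filter.Eventually.of_forall fun v => (gauss_shift hs μ v).symm)

lemma integral_gauss {s : ℝ} (hs : 0 < s) (μ : ℝ) : ∫ v : ℝ, gauss μ s v = 1 := by
  have hb : (0:ℝ) < 1 / (2 * s ^ 2) := by positivity
  have hK : (0:ℝ) < s * Real.sqrt (2 * π) := by have := Real.pi_pos; positivity
  calc ∫ v : ℝ, gauss μ s v
      = ∫ v : ℝ, (1 / (s * Real.sqrt (2 * π))) *
          Real.exp (-(1 / (2 * s ^ 2)) * (v - μ) ^ 2) := by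
        exact integral_congr_ae (Filter.Eventually.of_forall fun v => gauss_shift hs μ v)
    _ = ∫ x : ℝ, (1 / (s * Real.sqrt (2 * π))) * Real.exp (-(1 / (2 * s ^ 2)) * x ^ 2) :=
        integral_sub_right_eq_self (μ := volume) (fun x => (1 / (s * Real.sqrt (2 * π))) *
          Real.exp (-(1 / (2 * s ^ 2)) * x ^ 2)) μ
    _ = (1 / (s * Real.sqrt (2 * π))) * Real.sqrt (π / (1 / (2 * s ^ 2))) := by
        rw [integral_const_mul, integral_gaussian]
    _ = 1 := by rw [sqrt_pi_div hs]; field_simp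

lemma integrable_gauss_sq {s : ℝ} (hs : 0 < s) (μ : ℝ) :
    Integrable fun v : ℝ => gauss μ s v * (v - μ) ^ 2 := by
  have hb : (0:ℝ) < 1 / (2 * s ^ 2) := by positivity
  have h0 : Integrable fun x : ℝ => x ^ 2 * Real.exp (-(1 / (2 * s ^ 2)) * x ^ 2) :=
    integrable_sq_mul_exp_neg_mul_sq hb
  have h := (h0.const_mul (1 / (s * Real.sqrt (2 * π)))).comp_sub_right μ
  refine h.congr (Filter.Eventually.of_forall fun v => ?_)
  show _ = gauss μ s v * (v - μ) ^ 2
  rw [gauss_shift hs μ v]; ring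

lemma integral_gauss_sq {s : ℝ} (hs : 0 < s) (μ : ℝ) :
    ∫ v : ℝ, gauss μ s v * (v - μ) ^ 2 = s ^ 2 := by
  have hb : (0:ℝ) < 1 / (2 * s ^ 2) := by positivity
  have hK : (0:ℝ) < s * Real.sqrt (2 * π) := by have := Real.pi_pos; positivity
  have hsq : ∫ x : ℝ, x ^ 2 * Real.exp (-(1 / (2 * s ^ 2)) * x ^ 2)
      = (1 / (2 * (1 / (2 * s ^ 2)))) * Real.sqrt (π / (1 / (2 * s ^ 2))) :=
    integral_sq_mul_exp_neg_mul_sq hb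
  calc ∫ v : ℝ, gauss μ s v * (v - μ) ^ 2
      = ∫ v : ℝ, (1 / (s * Real.sqrt (2 * π))) *
          ((v - μ) ^ 2 * Real.exp (-(1 / (2 * s ^ 2)) * (v - μ) ^ 2)) := by
        refine integral_congr_ae (Filter.Eventually.of_forall fun v => ?_)
        show gauss μ s v * (v - μ) ^ 2 = _
        rw [gauss_shift hs μ v]; ring
    _ = ∫ x : ℝ, (1 / (s * Real.sqrt (2 * π))) *
          (x ^ 2 * Real.exp (-(1 / (2 * s ^ 2)) * x ^ 2)) :=
        integral_sub_right_eq_self (μ := volume) (fun x => (1 / (s * Real.sqrt (2 * π))) *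
          (x ^ 2 * Real.exp (-(1 / (2 * s ^ 2)) * x ^ 2))) μ
    _ = (1 / (s * Real.sqrt (2 * π))) *
          ((1 / (2 * (1 / (2 * s ^ 2)))) * Real.sqrt (π / (1 / (2 * s ^ 2)))) := by
        rw [integral_const_mul, hsq]
    _ = s ^ 2 := by
        rw [sqrt_pi_div hs]
        field_simp

lemma gauss_entropy_int {s : ℝ} (hs : 0 < s) (μ : ℝ) :
    Integrable (fun v : ℝ => gauss μ s v * (Real.log (gauss μ s v) - Real.log 2)) ∧
    ∫ v : ℝ, gauss μ s v * (Real.log (gauss μ s v) - Real.log 2)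
      = -Real.log (s * Real.sqrt (2 * π)) - 1/2 - Real.log 2 := by
  have hs' : s ≠ 0 := hs.ne'
  have hclosed : (fun v : ℝ => gauss μ s v * (Real.log (gauss μ s v) - Real.log 2))
      = fun v : ℝ => (-Real.log (s * Real.sqrt (2 * π)) - Real.log 2) * gauss μ s v
          - (1 / (2 * s ^ 2)) * (gauss μ s v * (v - μ) ^ 2) := by
    funext v
    rw [log_gauss hs μ v]
    field_simp
    ring
  constructor
  · rw [hclosed]
    exact ((integrable_gauss hs μ).const_mul _).sub ((integrable_gauss_sq hs μ).const_mul _)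
  · rw [hclosed, integral_sub ((integrable_gauss hs μ).const_mul _)
      ((integrable_gauss_sq hs μ).const_mul _), integral_const_mul, integral_const_mul,
      integral_gauss hs μ, integral_gauss_sq hs μ]
    field_simp
    ring

lemma cross_entropy_lower {s : ℝ} (hs : 0 < s) (μ : ℝ) {p : ℝ → ℝ}
    (hpc : Continuous p) (hppos : ∀ v, 0 < p v)
    (hple : ∀ v, p v ≤ (s * Real.sqrt (2 * π))⁻¹)
    (hge : ∀ v, gauss μ s v / 2 ≤ p v) :
    Integrable (fun v : ℝ => gauss μ s v * Real.log (p v)) ∧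
      -Real.log (s * Real.sqrt (2 * π)) - 1/2 - Real.log 2
        ≤ ∫ v : ℝ, gauss μ s v * Real.log (p v) := by
  have hK : (0:ℝ) < s * Real.sqrt (2 * π) := by have := Real.pi_pos; positivity
  have hlog_le : ∀ v, Real.log (p v) ≤ -Real.log (s * Real.sqrt (2 * π)) := fun v => by
    have h := Real.log_le_log (hppos v) (hple v)
    rwa [Real.log_inv] at h
  have hlog_ge : ∀ v, Real.log (gauss μ s v) - Real.log 2 ≤ Real.log (p v) := fun v => by
    have h2 : Real.log (gauss μ s v / 2) ≤ Real.log (p v) :=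
      Real.log_le_log (by have := gauss_pos hs μ v; positivity) (hge v)
    rwa [Real.log_div (gauss_pos hs μ v).ne' two_ne_zero] at h2
  have hq_cont : Continuous fun v => gauss μ s v * Real.log (p v) :=
    (gauss_continuous μ s).mul (hpc.log fun v => (hppos v).ne')
  have hlog2 : (0:ℝ) ≤ Real.log 2 := Real.log_nonneg (by norm_num)
  have habs : ∀ v, |Real.log (p v)| ≤ |Real.log (s * Real.sqrt (2 * π))| + Real.log 2
      + (v - μ) ^ 2 / (2 * s ^ 2) := fun v => by
    have h3 : (0:ℝ) ≤ (v - μ) ^ 2 / (2 * s ^ 2) := by positivity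
    rw [abs_le]
    constructor
    · have h := hlog_ge v
      rw [log_gauss hs μ v] at h
      linarith [le_abs_self (Real.log (s * Real.sqrt (2 * π)))]
    · have h := hlog_le v
      linarith [neg_abs_le (Real.log (s * Real.sqrt (2 * π)))]
  have hq_int : Integrable (fun v => gauss μ s v * Real.log (p v)) := by
    have hdom : Integrable (fun v : ℝ =>
        (|Real.log (s * Real.sqrt (2 * π))| + Real.log 2) * gauss μ s v
        + (1 / (2 * s ^ 2)) * (gauss μ s v * (v - μ) ^ 2)) :=
      ((integrable_gauss hs μ).const_mul _).add ((integrable_gauss_sq hs μ).const_mul _)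
    refine hdom.mono' hq_cont.aestronglyMeasurable (Filter.Eventually.of_forall fun v => ?_)
    have hg := gauss_pos hs μ v
    rw [Real.norm_eq_abs, abs_mul, abs_of_pos hg]
    calc gauss μ s v * |Real.log (p v)|
        ≤ gauss μ s v * (|Real.log (s * Real.sqrt (2 * π))| + Real.log 2
            + (v - μ) ^ 2 / (2 * s ^ 2)) := mul_le_mul_of_nonneg_left (habs v) hg.le
      _ = (|Real.log (s * Real.sqrt (2 * π))| + Real.log 2) * gauss μ s v
          + (1 / (2 * s ^ 2)) * (gauss μ s v * (v - μ) ^ 2) := by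
            field_simp
  obtain ⟨hil, hval⟩ := gauss_entropy_int hs μ
  have hmono : ∫ v : ℝ, gauss μ s v * (Real.log (gauss μ s v) - Real.log 2)
      ≤ ∫ v : ℝ, gauss μ s v * Real.log (p v) :=
    integral_mono hil hq_int fun v =>
      mul_le_mul_of_nonneg_left (by linarith [hlog_ge v]) (gauss_pos hs μ v).le
  exact ⟨hq_int, hval ▸ hmono⟩

/-- upper bound on the differential entropy of the standardized
two-component Gaussian mixture `p_z(v) = (N(v;−δ̂,σ̂) + N(v;δ̂,σ̂))/2`:
`H(p_z) ≤ (1/2)(1 + ln(2π)) − (1/2) ln(1 + r²) + ln 2` where `r = δ/σ`. -/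
theorem diffEntropy_standardized_mixture_upper (σ δ : ℝ) (hσ : 0 < σ) (hδ : 0 < δ)
    (r δhat σhat : ℝ) (hr : r = δ / σ)
    (hδhat : δhat = δ / Real.sqrt (σ ^ 2 + δ ^ 2))
    (hσhat : σhat = σ / Real.sqrt (σ ^ 2 + δ ^ 2)) :
    diffEntropy (fun v => (gauss (-δhat) σhat v + gauss δhat σhat v) / 2) ≤
      (1 / 2) * (1 + Real.log (2 * π)) - (1 / 2) * Real.log (1 + r ^ 2) + Real.log 2 := by
  have hss : (0:ℝ) < σ ^ 2 + δ ^ 2 := by positivity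
  have hsqrt : 0 < Real.sqrt (σ ^ 2 + δ ^ 2) := Real.sqrt_pos.mpr hss
  have hs : 0 < σhat := by rw [hσhat]; positivity
  have hK : (0:ℝ) < σhat * Real.sqrt (2 * π) := by have := Real.pi_pos; positivity
  set p : ℝ → ℝ := fun v => (gauss (-δhat) σhat v + gauss δhat σhat v) / 2 with hpdef
  have hpc : Continuous p :=
    ((gauss_continuous _ _).add (gauss_continuous _ _)).div_const 2
  have hppos : ∀ v, 0 < p v := fun v => by
    have h1 := gauss_pos hs (-δhat) v
    have h2 := gauss_pos hs δhat v
    simp only [hpdef]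
    positivity
  have hple : ∀ v, p v ≤ (σhat * Real.sqrt (2 * π))⁻¹ := fun v => by
    have h1 := gauss_le hs (-δhat) v
    have h2 := gauss_le hs δhat v
    simp only [hpdef]
    linarith
  have hge1 : ∀ v, gauss (-δhat) σhat v / 2 ≤ p v := fun v => by
    have h := (gauss_pos hs δhat v).le
    simp only [hpdef]
    linarith
  have hge2 : ∀ v, gauss δhat σhat v / 2 ≤ p v := fun v => by
    have h := (gauss_pos hs (-δhat) v).le
    simp only [hpdef]
    linarith
  obtain ⟨hi1, hb1⟩ := cross_entropy_lower hs (-δhat) hpc hppos hple hge1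
  obtain ⟨hi2, hb2⟩ := cross_entropy_lower hs δhat hpc hppos hple hge2
  have hsplit : ∫ v : ℝ, p v * Real.log (p v)
      = (1/2) * (∫ v : ℝ, gauss (-δhat) σhat v * Real.log (p v))
      + (1/2) * (∫ v : ℝ, gauss δhat σhat v * Real.log (p v)) := by
    rw [← integral_const_mul, ← integral_const_mul,
      ← integral_add (hi1.const_mul _) (hi2.const_mul _)]
    refine integral_congr_ae (Filter.Eventually.of_forall fun v => ?_)
    show p v * Real.log (p v) = _
    rw [hpdef]
    ring
  have hlow : -Real.log (σhat * Real.sqrt (2 * π)) - 1/2 - Real.log 2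
      ≤ ∫ v : ℝ, p v * Real.log (p v) := by
    rw [hsplit]; linarith
  have hlogs : Real.log σhat = -(1/2) * Real.log (1 + r ^ 2) := by
    rw [hσhat, hr, Real.log_div hσ.ne' hsqrt.ne', Real.log_sqrt hss.le,
      show 1 + (δ/σ)^2 = (σ^2 + δ^2)/σ^2 by field_simp,
      Real.log_div hss.ne' (by positivity), Real.log_pow]
    push_cast
    ring
  have hlogK : Real.log (σhat * Real.sqrt (2 * π))
      = Real.log σhat + (1/2) * Real.log (2*π) := by
    rw [Real.log_mul hs.ne' (by positivity), Real.log_sqrt (by positivity)]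
    ring
  show -∫ v : ℝ, p v * Real.log (p v) ≤ _
  linarith
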